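/- In the same matrix setting, for every X ∈ ℝⁿ the vector l·X lies in K = ker(a) and m·X lies in H = {ζ : ᵗξ·g·ζ = 0}; moreover K and H are complementary subspaces of ℝⁿ: K ∩ H = {0} and K + H = ℝⁿ, and g(ξ',ζ) = 0 for all ξ' ∈ K, ζ ∈ H. -/

import Mathlib

open Matrix

theorem K_H_complementary
    {n k : ℕ} (g a : Matrix (Fin n) (Fin n) ℝ) (ξ : Matrix (Fin n) (Fin k) ℝ)
    (hg : g.IsSymm) (hginv : IsUnit g.det)
    (ha : aᵀ = -a) (hrank : a.rank = n - k)
    (haξ : a * ξ = 0) (hortho : ξᵀ * g * ξ = 1)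
    (hker : ∀ v : Fin n → ℝ, a.mulVec v = 0 → ∃ c : Fin k → ℝ, v = ξ.mulVec c)
    (η : Matrix (Fin k) (Fin n) ℝ) (hη : η = ξᵀ * g)
    (l m : Matrix (Fin n) (Fin n) ℝ) (hl : l = ξ * η) (hm : m = 1 - l)
    (K H : Submodule ℝ (Fin n → ℝ))
    (hK : K = LinearMap.ker a.mulVecLin)
    (hH : H = LinearMap.ker η.mulVecLin) :
    (∀ X : Fin n → ℝ, l.mulVec X ∈ K ∧ m.mulVec X ∈ H) ∧
      K ⊓ H = ⊥ ∧ K ⊔ H = ⊤ ∧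
      (∀ ξ' ∈ K, ∀ ζ ∈ H, ξ' ⬝ᵥ g.mulVec ζ = 0) := by
  have hηξ : η * ξ = 1 := by rw [hη]; exact hortho
  have hal : a * l = 0 := by
    rw [hl, ← Matrix.mul_assoc, haξ, Matrix.zero_mul]
  have hηm : η * m = 0 := by
    rw [hm, hl, Matrix.mul_sub, Matrix.mul_one, ← Matrix.mul_assoc, hηξ,
      Matrix.one_mul, sub_self]
  have hmemK : ∀ X : Fin n → ℝ, l.mulVec X ∈ K := by
    intro X
    rw [hK, LinearMap.mem_ker, Matrix.mulVecLin_apply, Matrix.mulVec_mulVec, hal,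
      Matrix.zero_mulVec]
  have hmemH : ∀ X : Fin n → ℝ, m.mulVec X ∈ H := by
    intro X
    rw [hH, LinearMap.mem_ker, Matrix.mulVecLin_apply, Matrix.mulVec_mulVec, hηm,
      Matrix.zero_mulVec]
  refine ⟨fun X => ⟨hmemK X, hmemH X⟩, ?_, ?_, ?_⟩
  · -- K ⊓ H = ⊥
    rw [eq_bot_iff]
    intro v hv
    rw [Submodule.mem_inf] at hv
    obtain ⟨hvK, hvH⟩ := hv
    rw [hK, LinearMap.mem_ker, Matrix.mulVecLin_apply] at hvK
    rw [hH, LinearMap.mem_ker, Matrix.mulVecLin_apply] at hvH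
    obtain ⟨c, rfl⟩ := hker v hvK
    rw [Matrix.mulVec_mulVec, hηξ, Matrix.one_mulVec] at hvH
    simp [hvH]
  · -- K ⊔ H = ⊤
    rw [eq_top_iff]
    intro v _
    have : v = l.mulVec v + m.mulVec v := by
      rw [hm, Matrix.sub_mulVec, Matrix.one_mulVec]; ring_nf
    rw [this]
    exact Submodule.add_mem_sup (hmemK v) (hmemH v)
  · -- orthogonality
    intro ξ' hξ' ζ hζ
    rw [hK, LinearMap.mem_ker, Matrix.mulVecLin_apply] at hξ'
    rw [hH, LinearMap.mem_ker, Matrix.mulVecLin_apply] at hζ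
    obtain ⟨c, rfl⟩ := hker ξ' hξ'
    calc ξ.mulVec c ⬝ᵥ g.mulVec ζ
        = c ⬝ᵥ η.mulVec ζ := by
          rw [Matrix.dotProduct_mulVec, Matrix.vecMul_mulVec, ← hη,
            ← Matrix.dotProduct_mulVec]
      _ = 0 := by rw [hζ, dotProduct_zero]
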